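/- Let L/k be a dihedral extension of number fields of degree 2q with q odd, with quadratic subextension F and degree-q subextension K. Let G = Gal(L/F). Then μ(F) = μ(L) and μ(k) = μ(K) (equality of the groups of roots of unity), and there is an isomorphism of abelian groups ((U_L)^q ∩ U_F)/(U_F)^q ≅ I_G·U_L ∩ U_F, where the left side is a finite cyclic group; moreover this isomorphism interchanges the +1 and −1 eigenspaces for the action of Gal(F/k). -/

import Mathlib

open DihedralGroup NumberField IntermediateField

section Setup

variable (q : ℕ) (k L : Type*) [Field k] [Field L] [NumberField k] [NumberField L]
  [Algebra k L] [IsGalois k L]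

/-- The action of `g ∈ Gal(L/k)` on the units of `𝓞 L`. -/
noncomputable def uGal (g : L ≃ₐ[k] L) : (𝓞 L)ˣ →* (𝓞 L)ˣ :=
  Units.map (galRestrict (𝓞 k) k L (𝓞 L) g).toAlgHom.toRingHom.toMonoidHom

variable (F : IntermediateField k L)

/-- The embedding `U_F → U_L` of unit groups. -/
noncomputable def unitsInto : (𝓞 ↥F)ˣ →* (𝓞 L)ˣ :=
  Units.map (RingOfIntegers.mapRingHom (algebraMap ↥F L)).toMonoidHom

/-- `(U_L)^q ∩ U_F` as a subgroup of `U_L`. -/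
noncomputable def qPowCapUF : Subgroup (𝓞 L)ˣ :=
  (powMonoidHom q : (𝓞 L)ˣ →* (𝓞 L)ˣ).range ⊓ (unitsInto k L F).range

/-- `(U_F)^q` as a subgroup of `U_L`. -/
noncomputable def UFq : Subgroup (𝓞 L)ˣ :=
  ((powMonoidHom q : (𝓞 ↥F)ˣ →* (𝓞 ↥F)ˣ).range).map (unitsInto k L F)

/-- `I_G·U_L` written multiplicatively: the subgroup generated by the `u/ρ(u)`. -/
noncomputable def IGUnits (e : (L ≃ₐ[k] L) ≃* DihedralGroup q) : Subgroup (𝓞 L)ˣ :=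
  Subgroup.closure
    {x | ∃ u : (𝓞 L)ˣ, x = u * (uGal k L (e.symm (r 1)) u)⁻¹}

end Setup

namespace KummerAux

set_option linter.unusedSectionVars false
set_option linter.unnecessarySimpa false

variable {q : ℕ} [NeZero q] {k L : Type*} [Field k] [Field L] [NumberField k] [NumberField L]
  [Algebra k L] [IsGalois k L]

lemma coeL_injective : Function.Injective (fun u : (𝓞 L)ˣ => ((u : 𝓞 L) : L)) :=
  fun _ _ h => Units.ext (NumberField.RingOfIntegers.coe_injective h)

lemma uGal_coe (g : L ≃ₐ[k] L) (u : (𝓞 L)ˣ) :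
    ((uGal k L g u : 𝓞 L) : L) = g ((u : 𝓞 L) : L) :=
  algebraMap_galRestrict_apply (𝓞 k) g ((u : 𝓞 L))

lemma uGal_mul (g h : L ≃ₐ[k] L) (u : (𝓞 L)ˣ) :
    uGal k L (g * h) u = uGal k L g (uGal k L h u) :=
  coeL_injective (by simp [uGal_coe, AlgEquiv.mul_apply])

lemma uGal_one (u : (𝓞 L)ˣ) : uGal k L 1 u = u :=
  coeL_injective (by simp [uGal_coe])

lemma uGal_fixed_iff (g : L ≃ₐ[k] L) (u : (𝓞 L)ˣ) :
    uGal k L g u = u ↔ g ((u : 𝓞 L) : L) = ((u : 𝓞 L) : L) := by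
  constructor
  · intro h; rw [← uGal_coe, h]
  · intro h; exact coeL_injective (by simpa [uGal_coe] using h)

lemma coeL_pow (u : (𝓞 L)ˣ) (n : ℕ) :
    (((u ^ n : (𝓞 L)ˣ) : 𝓞 L) : L) = (((u : 𝓞 L) : L)) ^ n := by
  rw [Units.val_pow_eq_pow_val, NumberField.RingOfIntegers.coe_eq_algebraMap, map_pow]

lemma mem_fixedField_iff (S : Subgroup (L ≃ₐ[k] L)) (x : L) :
    x ∈ fixedField S ↔ ∀ g : S, (g : L ≃ₐ[k] L) x = x := Iff.rfl

/-- unit-level map attached to an automorphism -/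
noncomputable def um (g : L ≃ₐ[k] L) : Lˣ →* Lˣ :=
  Units.map (g.toAlgHom.toRingHom.toMonoidHom)

lemma um_coe (g : L ≃ₐ[k] L) (u : Lˣ) : ((um g u : Lˣ) : L) = g (u : L) := rfl

lemma rou_fixed (hq : Odd q) (e : (L ≃ₐ[k] L) ≃* DihedralGroup q)
    {x : L} {n : ℕ} (hn : 0 < n) (hxn : x ^ n = 1) :
    e.symm (r 1) x = x := by
  set ρf := e.symm (r 1) with hρf
  set σf := e.symm (sr 0) with hσf
  have hx0 : x ≠ 0 := by
    intro h
    rw [h, zero_pow hn.ne'] at hxn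
    exact zero_ne_one hxn
  set xu : Lˣ := Units.mk0 x hx0 with hxu
  have hxmem : xu ∈ rootsOfUnity n L := by
    rw [mem_rootsOfUnity']
    simpa [hxu] using hxn
  haveI : NeZero n := ⟨hn.ne'⟩
  obtain ⟨ζ, hζ⟩ := IsCyclic.exists_generator (α := ↥(rootsOfUnity n L))
  set zu : Lˣ := (ζ : Lˣ) with hzu
  set z : L := (zu : L) with hz
  -- every automorphism sends zu to an integer power of zu
  have key : ∀ g : L ≃ₐ[k] L, ∃ a : ℤ, um g zu = zu ^ a := by
    intro g
    have hmem : um g zu ∈ rootsOfUnity n L := by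
      rw [mem_rootsOfUnity, ← map_pow]
      have : zu ^ n = 1 := (mem_rootsOfUnity n zu).mp ζ.2
      rw [this, map_one]
    obtain ⟨a, ha⟩ := Subgroup.mem_zpowers_iff.mp (hζ ⟨um g zu, hmem⟩)
    refine ⟨a, ?_⟩
    have := congrArg (fun y : ↥(rootsOfUnity n L) => (y : Lˣ)) ha
    simpa using this.symm
  obtain ⟨a, ha⟩ := key ρf
  obtain ⟨b, hb⟩ := key σf
  have hσ2 : σf * σf = 1 := by
    rw [hσf, ← map_mul, sr_mul_sr, sub_self, ← one_def, map_one]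
  have hrinv : (r 1 : DihedralGroup q)⁻¹ = r (-1) := by
    refine inv_eq_of_mul_eq_one_right ?_
    rw [r_mul_r, add_neg_cancel, one_def]
  have hrel : σf * ρf * σf = ρf⁻¹ := by
    rw [hσf, hρf, ← map_mul, ← map_mul, ← map_inv, hrinv, sr_mul_r, sr_mul_sr]
    norm_num
  have humm : ∀ g h : L ≃ₐ[k] L, ∀ u : Lˣ, um (g * h) u = um g (um h u) := by
    intro g h u; exact Units.ext (by simp [um_coe, AlgEquiv.mul_apply])
  have e2 : zu ^ (b * b) = zu := by
    have h1 : um (σf * σf) zu = zu := by rw [hσ2]; exact Units.ext rfl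
    rw [humm, hb, map_zpow, hb, ← zpow_mul] at h1
    exact h1
  have e1 : zu ^ (a * (b * (a * b))) = zu := by
    have h1 : um ρf (um (σf * ρf * σf) zu) = um ρf (um ρf⁻¹ zu) := by rw [hrel]
    have h2 : um ρf (um ρf⁻¹ zu) = zu := by
      rw [← humm, mul_inv_cancel]
      exact Units.ext (by simp [um_coe])
    rw [humm, humm, hb, map_zpow, ha, ← zpow_mul, map_zpow, hb, ← zpow_mul,
      map_zpow, ha, ← zpow_mul] at h1
    rw [h2] at h1
    convert h1 using 2
    all_goals ring
  have e3 : zu ^ (a * a) = zu := by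
    calc zu ^ (a * a) = (zu ^ (b * b)) ^ (a * a) := by rw [e2]
      _ = zu ^ (a * (b * (a * b))) := by rw [← zpow_mul]; ring_nf
      _ = zu := e1
  set S := MulAction.stabilizer (L ≃ₐ[k] L) z with hS
  have hρ2 : ρf ^ (2 : ℕ) ∈ S := by
    rw [MulAction.mem_stabilizer_iff, AlgEquiv.smul_def, pow_two, AlgEquiv.mul_apply]
    have hza : ρf z = z ^ a := by
      have := congrArg (fun y : Lˣ => (y : L)) ha
      simpa [um_coe, hz, Units.val_zpow_eq_zpow_val] using this
    rw [hza, map_zpow₀, hza, ← zpow_mul]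
    have := congrArg (fun y : Lˣ => (y : L)) e3
    simpa [hz, Units.val_zpow_eq_zpow_val] using this
  have hρq : ρf ^ q = 1 := by
    rw [hρf, ← map_pow, r_one_pow_n, map_one]
  have hρqS : ρf ^ q ∈ S := by rw [hρq]; exact one_mem S
  obtain ⟨c, hc⟩ := hq
  have hρS : ρf ∈ S := by
    have hmem : (ρf ^ q) * ((ρf ^ (2 : ℕ)) ^ c)⁻¹ ∈ S :=
      mul_mem hρqS (inv_mem (pow_mem hρ2 c))
    have heq : (ρf ^ q) * ((ρf ^ (2 : ℕ)) ^ c)⁻¹ = ρf := by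
      rw [hc, ← pow_mul, pow_add, pow_mul]
      group
    rwa [heq] at hmem
  obtain ⟨m, hm⟩ := Subgroup.mem_zpowers_iff.mp (hζ ⟨xu, hxmem⟩)
  have hxz : z ^ m = x := by
    have := congrArg (fun y : ↥(rootsOfUnity n L) => ((y : Lˣ) : L)) hm
    simpa [hz, hzu, hxu, Units.val_zpow_eq_zpow_val] using this
  have hρz : ρf z = z := by
    rw [MulAction.mem_stabilizer_iff, AlgEquiv.smul_def] at hρS
    exact hρS
  rw [← hxz, map_zpow₀, hρz]

lemma unitsInto_coe (F : IntermediateField k L) (w : (𝓞 ↥F)ˣ) :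
    ((unitsInto k L F w : 𝓞 L) : L) = algebraMap (↥F) L ((w : 𝓞 ↥F) : ↥F) := rfl

lemma mem_unitsInto_range_iff (F : IntermediateField k L) (u : (𝓞 L)ˣ) :
    u ∈ (unitsInto k L F).range ↔ ((u : 𝓞 L) : L) ∈ F := by
  constructor
  · rintro ⟨w, rfl⟩
    rw [unitsInto_coe]
    exact ((w : 𝓞 ↥F) : ↥F).2
  · intro hu
    have h1 : ((u : 𝓞 L) : L) * (((u⁻¹ : (𝓞 L)ˣ) : 𝓞 L) : L) = 1 := by
      have h0 : ((u : 𝓞 L) * ((u⁻¹ : (𝓞 L)ˣ) : 𝓞 L)) = 1 := u.mul_inv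
      have := congrArg (algebraMap (𝓞 L) L) h0
      simpa using this
    have hcui : (((u⁻¹ : (𝓞 L)ˣ) : 𝓞 L) : L) ∈ F := by
      have : (((u⁻¹ : (𝓞 L)ˣ) : 𝓞 L) : L) = (((u : 𝓞 L) : L))⁻¹ :=
        eq_inv_of_mul_eq_one_left (by rw [mul_comm]; exact h1)
      rw [this]
      exact F.inv_mem hu
    set y₁ : ↥F := ⟨_, hu⟩ with hy₁
    set y₂ : ↥F := ⟨_, hcui⟩ with hy₂
    have hint₁ : IsIntegral ℤ y₁ := by
      rw [← isIntegral_algebraMap_iff (algebraMap (↥F) L).injective]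
      exact NumberField.RingOfIntegers.isIntegral_coe (u : 𝓞 L)
    have hint₂ : IsIntegral ℤ y₂ := by
      rw [← isIntegral_algebraMap_iff (algebraMap (↥F) L).injective]
      exact NumberField.RingOfIntegers.isIntegral_coe ((u⁻¹ : (𝓞 L)ˣ) : 𝓞 L)
    refine ⟨⟨⟨y₁, hint₁⟩, ⟨y₂, hint₂⟩, ?_, ?_⟩, ?_⟩
    · apply NumberField.RingOfIntegers.ext
      apply Subtype.ext (p := (· ∈ F))
      exact h1
    · apply NumberField.RingOfIntegers.ext
      apply Subtype.ext (p := (· ∈ F))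
      rw [mul_comm] at h1
      exact h1
    · apply Units.ext
      apply NumberField.RingOfIntegers.ext
      rw [unitsInto_coe]
      rfl

lemma mem_F_iff (e : (L ≃ₐ[k] L) ≃* DihedralGroup q) (x : L) :
    x ∈ fixedField ((Subgroup.closure {(r 1 : DihedralGroup q)}).comap e.toMonoidHom) ↔
      e.symm (r 1) x = x := by
  have hρmem : e.symm (r 1) ∈ (Subgroup.closure {(r 1 : DihedralGroup q)}).comap e.toMonoidHom := by
    rw [Subgroup.mem_comap]
    simpa using Subgroup.subset_closure (Set.mem_singleton _)
  constructor
  · intro hx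
    exact hx ⟨e.symm (r 1), hρmem⟩
  · intro hx g
    obtain ⟨g, hg⟩ := g
    rw [Subgroup.mem_comap, Subgroup.mem_closure_singleton] at hg
    obtain ⟨m, hm⟩ := hg
    have hgm : g = (e.symm (r 1)) ^ m := by
      apply e.injective
      rw [map_zpow, MulEquiv.apply_symm_apply]
      exact hm.symm
    have hst : e.symm (r 1) ∈ MulAction.stabilizer (L ≃ₐ[k] L) x := hx
    have hmm := Subgroup.zpow_mem _ hst m
    rw [MulAction.mem_stabilizer_iff] at hmm
    show g • x = x
    rw [hgm]
    exact hmm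

noncomputable def deltaHom (e : (L ≃ₐ[k] L) ≃* DihedralGroup q) : (𝓞 L)ˣ →* (𝓞 L)ˣ :=
  MonoidHom.mk' (fun u => u * (uGal k L (e.symm (r 1)) u)⁻¹) (by
    intro a b
    show a * b * (uGal k L (e.symm (r 1)) (a * b))⁻¹ =
      a * (uGal k L (e.symm (r 1)) a)⁻¹ * (b * (uGal k L (e.symm (r 1)) b)⁻¹)
    rw [map_mul, mul_inv, mul_mul_mul_comm])

lemma IGUnits_eq (e : (L ≃ₐ[k] L) ≃* DihedralGroup q) :
    IGUnits q k L e = (deltaHom e).range := by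
  apply le_antisymm
  · rw [IGUnits, Subgroup.closure_le]
    rintro x ⟨u, rfl⟩
    exact ⟨u, rfl⟩
  · rintro x ⟨u, rfl⟩
    exact Subgroup.subset_closure ⟨u, rfl⟩

lemma hsolve {a b c : (𝓞 L)ˣ} (h : a * b⁻¹ = c) : b = a * c⁻¹ := by
  rw [← h, mul_inv_rev, inv_inv, mul_comm b a⁻¹, mul_inv_cancel_left]

end KummerAux

/-- Let `L/k` be dihedral of degree `2q` (`q` odd), `F` the quadratic
subextension and `K` a degree-`q` subextension, `G = Gal(L/F) = ⟨ρ⟩`.  Then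
`μ(F) = μ(L)` and `μ(k) = μ(K)`; there is an isomorphism of abelian groups
`((U_L)^q ∩ U_F)/(U_F)^q ≅ I_G·U_L ∩ U_F`, the left side being a finite cyclic group;
and the isomorphism is `Gal(F/k)`-antiequivariant (represented by `σ`), hence it
interchanges the `+1` and `-1` eigenspaces. -/
theorem kummer_units_iso_dihedral (q : ℕ) [NeZero q] (hq : Odd q)
    (k L : Type*) [Field k] [Field L] [NumberField k] [NumberField L]
    [Algebra k L] [IsGalois k L]
    (e : (L ≃ₐ[k] L) ≃* DihedralGroup q)
    (F K : IntermediateField k L)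
    (hF : F = fixedField ((Subgroup.closure {(r 1 : DihedralGroup q)}).comap e.toMonoidHom))
    (hK : K = fixedField ((Subgroup.closure {(sr 0 : DihedralGroup q)}).comap e.toMonoidHom)) :
    (∀ x : L, (∃ n : ℕ, 0 < n ∧ x ^ n = 1) → x ∈ F) ∧
    (∀ x : L, x ∈ K → (∃ n : ℕ, 0 < n ∧ x ^ n = 1) → x ∈ (⊥ : IntermediateField k L)) ∧
    Finite (↥(qPowCapUF q k L F) ⧸ ((UFq q k L F).subgroupOf (qPowCapUF q k L F))) ∧
    IsCyclic (↥(qPowCapUF q k L F) ⧸ ((UFq q k L F).subgroupOf (qPowCapUF q k L F))) ∧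
    ∃ Φ : (↥(qPowCapUF q k L F) ⧸ ((UFq q k L F).subgroupOf (qPowCapUF q k L F))) ≃*
        ↥(IGUnits q k L e ⊓ (unitsInto k L F).range),
      ∀ (x : ↥(qPowCapUF q k L F))
        (hσx : uGal k L (e.symm (sr 0)) (x : (𝓞 L)ˣ) ∈ qPowCapUF q k L F),
        ((Φ (QuotientGroup.mk ⟨uGal k L (e.symm (sr 0)) (x : (𝓞 L)ˣ), hσx⟩) : ↥(IGUnits q k L e ⊓ (unitsInto k L F).range)) : (𝓞 L)ˣ) =
          (uGal k L (e.symm (sr 0))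
            ((Φ (QuotientGroup.mk x) : ↥(IGUnits q k L e ⊓ (unitsInto k L F).range)) : (𝓞 L)ˣ))⁻¹ := by
  classical
  have hq1 : 0 < q := Nat.pos_of_ne_zero (NeZero.ne q)
  set ρf : L ≃ₐ[k] L := e.symm (r 1) with hρf
  set σf : L ≃ₐ[k] L := e.symm (sr 0) with hσf
  have hrou : ∀ y : L, (∃ n : ℕ, 0 < n ∧ y ^ n = 1) → ρf y = y := by
    rintro y ⟨n, hn, hyn⟩
    exact KummerAux.rou_fixed hq e hn hyn
  have hmemF : ∀ y : L, y ∈ F ↔ ρf y = y := by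
    intro y; rw [hF]; exact KummerAux.mem_F_iff e y
  -- Part 1
  have part1 : ∀ x : L, (∃ n : ℕ, 0 < n ∧ x ^ n = 1) → x ∈ F :=
    fun x hx => (hmemF x).2 (hrou x hx)
  -- Part 2
  have part2 : ∀ x : L, x ∈ K → (∃ n : ℕ, 0 < n ∧ x ^ n = 1) →
      x ∈ (⊥ : IntermediateField k L) := by
    intro x hxK hx
    have hρx : ρf x = x := hrou x hx
    have hst : ρf ∈ MulAction.stabilizer (L ≃ₐ[k] L) x := hρx
    have hpow : ∀ m : ℕ, (ρf ^ m) x = x := by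
      intro m
      have hmm := pow_mem hst m
      rw [MulAction.mem_stabilizer_iff] at hmm
      exact hmm
    have hσx : σf x = x := by
      rw [hK] at hxK
      have hσmem : σf ∈ (Subgroup.closure {(sr 0 : DihedralGroup q)}).comap e.toMonoidHom := by
        rw [Subgroup.mem_comap]
        have h9 : e.toMonoidHom σf = sr 0 := by rw [hσf]; exact e.apply_symm_apply _
        rw [h9]
        exact Subgroup.subset_closure rfl
      exact (KummerAux.mem_fixedField_iff _ x).1 hxK ⟨σf, hσmem⟩
    have hall : ∀ g : L ≃ₐ[k] L, g x = x := by
      intro g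
      have hg : g = e.symm (e g) := (e.symm_apply_apply g).symm
      rcases hd : e g with j | j
      · have hgj : g = ρf ^ (j.val) := by
          rw [hg, hd, hρf, ← map_pow, r_one_pow]
          simp [ZMod.natCast_val, ZMod.cast_id]
        rw [hgj]
        exact hpow j.val
      · have hgj : g = σf * ρf ^ (j.val) := by
          rw [hg, hd, hσf, hρf, ← map_pow, r_one_pow, ← map_mul, sr_mul_r]
          simp [ZMod.natCast_val, ZMod.cast_id]
        rw [hgj, AlgEquiv.mul_apply, hpow, hσx]
    have hxtop : x ∈ fixedField (⊤ : Subgroup (L ≃ₐ[k] L)) :=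
      (KummerAux.mem_fixedField_iff ⊤ x).2 (fun g => hall g)
    rwa [← IntermediateField.fixingSubgroup_bot (F := k) (E := L),
      IsGalois.fixedField_fixingSubgroup] at hxtop
  -- infrastructure for the isomorphism
  have hfixiff : ∀ u : (𝓞 L)ˣ, u ∈ (unitsInto k L F).range ↔ uGal k L ρf u = u := by
    intro u
    rw [KummerAux.mem_unitsInto_range_iff, hmemF]
    exact (KummerAux.uGal_fixed_iff ρf u).symm
  have hWell : ∀ v v' : (𝓞 L)ˣ, v ^ q = v' ^ q →
      v⁻¹ * uGal k L ρf v = v'⁻¹ * uGal k L ρf v' := by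
    intro v v' hvv
    have hζq : (v * v'⁻¹) ^ q = 1 := by
      rw [mul_pow, inv_pow, hvv, mul_inv_cancel]
    have hζfix : uGal k L ρf (v * v'⁻¹) = v * v'⁻¹ := by
      rw [KummerAux.uGal_fixed_iff]
      apply hrou
      refine ⟨q, hq1, ?_⟩
      rw [← KummerAux.coeL_pow, hζq]
      simp
    have hv' : v = (v * v'⁻¹) * v' := by group
    calc v⁻¹ * uGal k L ρf v
        = v⁻¹ * (uGal k L ρf (v * v'⁻¹) * uGal k L ρf v') := by rw [← map_mul, ← hv']
      _ = v⁻¹ * ((v * v'⁻¹) * uGal k L ρf v') := by rw [hζfix]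
      _ = v'⁻¹ * uGal k L ρf v' := by group
  have hρq1 : ρf ^ q = 1 := by
    rw [hρf, ← map_pow, r_one_pow_n, map_one]
  have hσρ : ρf * σf = σf * ρf⁻¹ := by
    have hrinv : (r 1 : DihedralGroup q)⁻¹ = r (-1) := by
      refine inv_eq_of_mul_eq_one_right ?_
      rw [r_mul_r, add_neg_cancel, ← one_def]
    rw [hρf, hσf, ← map_inv, hrinv, ← map_mul, ← map_mul, r_mul_sr, sr_mul_r]
    norm_num
  have huGal_invfix : ∀ u : (𝓞 L)ˣ, uGal k L ρf u = u → uGal k L ρf⁻¹ u = u := by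
    intro u h
    have h2 := congrArg (uGal k L ρf⁻¹) h
    rw [← KummerAux.uGal_mul, inv_mul_cancel, KummerAux.uGal_one] at h2
    exact h2.symm
  have hmemP : ∀ u : (𝓞 L)ˣ, u ∈ qPowCapUF q k L F ↔
      (∃ w, w ^ q = u) ∧ u ∈ (unitsInto k L F).range := by
    intro u
    simp only [qPowCapUF, Subgroup.mem_inf, MonoidHom.mem_range, powMonoidHom_apply]
  have hmemUFq : ∀ u : (𝓞 L)ˣ, u ∈ UFq q k L F ↔
      ∃ w : (𝓞 ↥F)ˣ, unitsInto k L F (w ^ q) = u := by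
    intro u
    simp only [UFq, Subgroup.mem_map, MonoidHom.mem_range, powMonoidHom_apply]
    constructor
    · rintro ⟨y, ⟨w, rfl⟩, h2⟩; exact ⟨w, h2⟩
    · rintro ⟨w, h⟩; exact ⟨w ^ q, ⟨w, rfl⟩, h⟩
  have hex : ∀ x : ↥(qPowCapUF q k L F), ∃ v : (𝓞 L)ˣ, v ^ q = (x : (𝓞 L)ˣ) :=
    fun x => ((hmemP x).1 x.2).1
  choose v hv using hex
  have hxrange : ∀ x : ↥(qPowCapUF q k L F), (x : (𝓞 L)ˣ) ∈ (unitsInto k L F).range :=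
    fun x => ((hmemP x).1 x.2).2
  set valf : ↥(qPowCapUF q k L F) → (𝓞 L)ˣ :=
    fun x => (v x)⁻¹ * uGal k L ρf (v x) with hvalf
  have hρvq : ∀ x, (uGal k L ρf (v x)) ^ q = (v x) ^ q := by
    intro x
    rw [← map_pow, hv x, (hfixiff _).1 (hxrange x)]
  have hvalfix : ∀ x, uGal k L ρf (valf x) = valf x := by
    intro x
    show uGal k L ρf ((v x)⁻¹ * uGal k L ρf (v x)) = (v x)⁻¹ * uGal k L ρf (v x)
    rw [map_mul, map_inv]
    exact hWell (uGal k L ρf (v x)) (v x) (hρvq x)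
  have hvalT : ∀ x, valf x ∈ IGUnits q k L e ⊓ (unitsInto k L F).range := by
    intro x
    refine Subgroup.mem_inf.mpr ⟨?_, ?_⟩
    · rw [KummerAux.IGUnits_eq]
      refine ⟨(v x)⁻¹, ?_⟩
      show (v x)⁻¹ * (uGal k L (e.symm (r 1)) ((v x)⁻¹))⁻¹ = valf x
      rw [← hρf, map_inv, inv_inv, hvalf]
    · exact (hfixiff (valf x)).2 (hvalfix x)
  have hTq : ∀ t : (𝓞 L)ˣ, t ∈ IGUnits q k L e ⊓ (unitsInto k L F).range → t ^ q = 1 := by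
    intro t ht
    obtain ⟨htI, htR⟩ := Subgroup.mem_inf.mp ht
    rw [KummerAux.IGUnits_eq] at htI
    obtain ⟨u, hu⟩ := htI
    have hu0 : u * (uGal k L ρf u)⁻¹ = t := by rw [hρf]; exact hu
    have hu' : uGal k L ρf u = u * t⁻¹ := KummerAux.hsolve hu0
    have hρt : uGal k L ρf t = t := (hfixiff t).1 htR
    have hj : ∀ j : ℕ, uGal k L (ρf ^ j) u = u * (t⁻¹) ^ j := by
      intro j; induction j with
      | zero => rw [pow_zero, KummerAux.uGal_one, pow_zero, mul_one]
      | succ n ih =>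
        rw [pow_succ', KummerAux.uGal_mul, ih, map_mul, map_pow, map_inv, hρt, hu',
          pow_succ', mul_assoc]
    have hjq := hj q
    rw [hρq1, KummerAux.uGal_one] at hjq
    have h2 : (t⁻¹ : (𝓞 L)ˣ) ^ q = 1 := left_eq_mul.mp hjq
    rwa [inv_pow, inv_eq_one] at h2
  -- the homomorphism
  set Ψ : ↥(qPowCapUF q k L F) →* ↥(IGUnits q k L e ⊓ (unitsInto k L F).range) :=
    MonoidHom.mk' (fun x => ⟨valf x, hvalT x⟩) (by
      intro x y
      apply Subtype.ext
      show valf (x * y) = valf x * valf y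
      have h1 : (v (x * y)) ^ q = (v x * v y) ^ q := by
        rw [mul_pow, hv, hv, hv]
        rfl
      have h2 := hWell (v (x * y)) (v x * v y) h1
      show (v (x * y))⁻¹ * uGal k L ρf (v (x * y)) = valf x * valf y
      rw [h2, map_mul, mul_inv, mul_mul_mul_comm]) with hΨ
  have hker : Ψ.ker = (UFq q k L F).subgroupOf (qPowCapUF q k L F) := by
    ext x
    rw [MonoidHom.mem_ker, Subgroup.mem_subgroupOf]
    constructor
    · intro h
      have h1 : valf x = 1 := congrArg Subtype.val h
      have h2 : uGal k L ρf (v x) = v x := (inv_mul_eq_one.mp h1).symm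
      obtain ⟨w, hw⟩ := (hfixiff (v x)).2 h2
      rw [hmemUFq]
      exact ⟨w, by rw [map_pow, hw, hv]⟩
    · intro h
      obtain ⟨w, hw⟩ := (hmemUFq _).1 h
      apply Subtype.ext
      show valf x = 1
      have hq' : (v x) ^ q = (unitsInto k L F w) ^ q := by
        rw [hv, ← hw, map_pow]
      have h3 := hWell (v x) (unitsInto k L F w) hq'
      have h4 : uGal k L ρf (unitsInto k L F w) = unitsInto k L F w :=
        (hfixiff _).1 ⟨w, rfl⟩
      show (v x)⁻¹ * uGal k L ρf (v x) = 1
      rw [h3, h4, inv_mul_cancel]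
  have hsurj : Function.Surjective Ψ := by
    rintro ⟨t, htT⟩
    obtain ⟨htI, htR⟩ := Subgroup.mem_inf.mp htT
    have htinvI : t⁻¹ ∈ IGUnits q k L e := inv_mem htI
    rw [KummerAux.IGUnits_eq] at htinvI
    obtain ⟨u, hu⟩ := htinvI
    have hu0 : u * (uGal k L ρf u)⁻¹ = t⁻¹ := by rw [hρf]; exact hu
    have hρu : uGal k L ρf u = u * t := by
      have := KummerAux.hsolve hu0
      rwa [inv_inv] at this
    have hxq : uGal k L ρf (u ^ q) = u ^ q := by
      rw [map_pow, hρu, mul_pow, hTq t htT, mul_one]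
    have hxP : u ^ q ∈ qPowCapUF q k L F :=
      (hmemP _).2 ⟨⟨u, rfl⟩, (hfixiff _).2 hxq⟩
    refine ⟨⟨u ^ q, hxP⟩, ?_⟩
    apply Subtype.ext
    show valf ⟨u ^ q, hxP⟩ = t
    have h1 := hWell (v ⟨u ^ q, hxP⟩) u (by rw [hv])
    show (v ⟨u ^ q, hxP⟩)⁻¹ * uGal k L ρf (v ⟨u ^ q, hxP⟩) = t
    rw [h1, hρu, inv_mul_cancel_left]
  -- finiteness and cyclicity of the target
  have hTle : IGUnits q k L e ⊓ (unitsInto k L F).range ≤ NumberField.Units.torsion L := by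
    intro t ht
    have : IsOfFinOrder t := isOfFinOrder_iff_pow_eq_one.mpr ⟨q, hq1, hTq t ht⟩
    exact this
  haveI hcycT : IsCyclic ↥(IGUnits q k L e ⊓ (unitsInto k L F).range) :=
    Subgroup.isCyclic_of_le hTle
  haveI hfinT : Finite ↥(IGUnits q k L e ⊓ (unitsInto k L F).range) :=
    Finite.of_injective (Subgroup.inclusion hTle) (Subgroup.inclusion_injective hTle)
  -- the isomorphism
  set Φ : (↥(qPowCapUF q k L F) ⧸ ((UFq q k L F).subgroupOf (qPowCapUF q k L F))) ≃*
      ↥(IGUnits q k L e ⊓ (unitsInto k L F).range) :=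
    (QuotientGroup.quotientMulEquivOfEq hker.symm).trans
      (QuotientGroup.quotientKerEquivOfSurjective Ψ hsurj) with hΦ
  have hΦmk : ∀ y : ↥(qPowCapUF q k L F), Φ (QuotientGroup.mk y) = Ψ y := by
    intro y
    show (QuotientGroup.quotientKerEquivOfSurjective Ψ hsurj)
      ((QuotientGroup.quotientMulEquivOfEq hker.symm) (QuotientGroup.mk y)) = Ψ y
    rw [QuotientGroup.quotientMulEquivOfEq_mk]
    exact QuotientGroup.kerLift_mk Ψ y
  have hfinQ : Finite (↥(qPowCapUF q k L F) ⧸ ((UFq q k L F).subgroupOf (qPowCapUF q k L F))) :=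
    Finite.of_equiv _ Φ.toEquiv.symm
  have hcycQ : IsCyclic (↥(qPowCapUF q k L F) ⧸ ((UFq q k L F).subgroupOf (qPowCapUF q k L F))) :=
    isCyclic_of_surjective Φ.symm Φ.symm.surjective
  refine ⟨part1, part2, hfinQ, hcycQ, Φ, ?_⟩
  intro x hσx
  rw [hΦmk, hΦmk]
  show valf ⟨uGal k L σf (x : (𝓞 L)ˣ), hσx⟩ = (uGal k L σf (valf x))⁻¹
  set w : (𝓞 L)ˣ := valf x with hw
  have hw1 : uGal k L ρf (v x) = (v x) * w := by
    rw [hw, hvalf]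
    show uGal k L ρf (v x) = (v x) * ((v x)⁻¹ * uGal k L ρf (v x))
    rw [mul_inv_cancel_left]
  have hρw : uGal k L ρf w = w := hvalfix x
  have hρinvw : uGal k L ρf⁻¹ w = w := huGal_invfix w hρw
  have hρinv_v : uGal k L ρf⁻¹ (v x) = (v x) * w⁻¹ := by
    have h5 := congrArg (uGal k L ρf⁻¹) hw1
    rw [← KummerAux.uGal_mul, inv_mul_cancel, KummerAux.uGal_one, map_mul, hρinvw] at h5
    refine mul_right_cancel (b := w) ?_
    rw [inv_mul_cancel_right]
    exact h5.symm
  have hcommu : ∀ u : (𝓞 L)ˣ, uGal k L ρf (uGal k L σf u) = uGal k L σf (uGal k L ρf⁻¹ u) := by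
    intro u
    rw [← KummerAux.uGal_mul, ← KummerAux.uGal_mul, hσρ]
  have hq2 : (v ⟨uGal k L σf (x : (𝓞 L)ˣ), hσx⟩) ^ q = (uGal k L σf (v x)) ^ q := by
    rw [hv, ← map_pow, hv]
  have h2 := hWell (v ⟨uGal k L σf (x : (𝓞 L)ˣ), hσx⟩) (uGal k L σf (v x)) hq2
  show (v ⟨uGal k L σf (x : (𝓞 L)ˣ), hσx⟩)⁻¹ *
      uGal k L ρf (v ⟨uGal k L σf (x : (𝓞 L)ˣ), hσx⟩) = (uGal k L σf w)⁻¹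
  rw [h2, hcommu, hρinv_v, map_mul, inv_mul_cancel_left, map_inv]
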